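/- Let $\mu$ be a probability measure on a measurable space, $V$ an $N$-dimensional subspace of $L^2(\mu, \mathbb{C})$ with orthonormal basis $s_1,\dots,s_N$. Then $\int |\det(s_i(x_j))_{i,j}|^2 \, d\mu^{\otimes N}(x_1,\dots,x_N) = N!$. -/

import Mathlib

open MeasureTheory

/-- If `s₁, …, s_N` is an orthonormal family in `L²(μ,ℂ)` for a probability measure `μ`, then
`∫ |det(sᵢ(xⱼ))|² dμ^{⊗N} = N!`. -/
theorem stmt_3 {Ω : Type*} [MeasurableSpace Ω] (μ : Measure Ω) [IsProbabilityMeasure μ]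
    (N : ℕ) (s : Fin N → Ω → ℂ)
    (hmeas : ∀ i, Measurable (s i))
    (hL2 : ∀ i, MemLp (s i) 2 μ)
    (hON : ∀ i j, ∫ a, s i a * (starRingEnd ℂ) (s j a) ∂μ = if i = j then 1 else 0) :
    ∫ x : Fin N → Ω, ‖Matrix.det (Matrix.of fun i j => s i (x j))‖ ^ 2
        ∂(Measure.pi fun _ => μ) = (Nat.factorial N : ℝ) := by
  classical
  letI : MeasureSpace Ω := ⟨μ⟩
  have hvol : (Measure.pi fun _ : Fin N => μ) = (volume : Measure (Fin N → Ω)) := rfl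
  -- notation
  set c : Equiv.Perm (Fin N) → ℂ := fun σ => ((Equiv.Perm.sign σ : ℤ) : ℂ) with hc
  set g : Fin N → Fin N → Ω → ℂ :=
    fun i j a => s i a * (starRingEnd ℂ) (s j a) with hg
  -- conjugates are in L²
  have hconj : ∀ j, MemLp (fun a => (starRingEnd ℂ) (s j a)) 2 μ := fun j =>
    (hL2 j).of_le (Complex.continuous_conj.comp_aestronglyMeasurable (hL2 j).1)
      (Filter.Eventually.of_forall fun a => by simp)
  -- each product s i * conj (s j) is integrable
  have hint : ∀ i j, Integrable (g i j) μ := by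
    intro i j
    have h12 : (1 : ENNReal) / 1 = 1 / 2 + 1 / 2 := by
      rw [ENNReal.div_add_div_same, one_add_one_eq_two,
        ENNReal.div_self (by norm_num) (by norm_num)]
      exact (ENNReal.div_self (by norm_num) (by norm_num)).symm
    have h := (hconj j).smul (hL2 i) (r := 1)
    rw [memLp_one_iff_integrable] at h
    simpa [hg, smul_eq_mul, Pi.mul_def] using h
  -- pointwise expansion of |det|^2
  have hdet : ∀ x : Fin N → Ω,
      (‖Matrix.det (Matrix.of fun i j => s i (x j))‖ ^ 2 : ℝ) =
      (∑ σ : Equiv.Perm (Fin N), ∑ τ : Equiv.Perm (Fin N),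
        c σ * c τ * ∏ j, g (σ j) (τ j) (x j)).re := by
    intro x
    set D := Matrix.det (Matrix.of fun i j => s i (x j)) with hD
    have h1 : (‖D‖ ^ 2 : ℝ) = (D * (starRingEnd ℂ) D).re := by
      rw [Complex.mul_conj]
      simp [Complex.sq_norm]
    have h2 : D * (starRingEnd ℂ) D =
        ∑ σ : Equiv.Perm (Fin N), ∑ τ : Equiv.Perm (Fin N),
          c σ * c τ * ∏ j, g (σ j) (τ j) (x j) := by
      rw [hD, Matrix.det_apply', map_sum, Finset.sum_mul_sum]
      refine Finset.sum_congr rfl fun σ _ => Finset.sum_congr rfl fun τ _ => ?_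
      simp only [map_mul, map_prod, map_intCast, Matrix.of_apply]
      rw [hg, hc]
      rw [Finset.prod_mul_distrib]
      ring
    rw [h1, h2]
  -- each term of the expansion is integrable over the product space
  have hterm : ∀ σ τ : Equiv.Perm (Fin N),
      Integrable (fun x : Fin N → Ω => c σ * c τ * ∏ j, g (σ j) (τ j) (x j))
        (Measure.pi fun _ => μ) := by
    intro σ τ
    rw [hvol]
    exact (Integrable.fintype_prod (f := fun j => g (σ j) (τ j))
      (fun j => hint (σ j) (τ j))).const_mul _
  have hF : Integrable (fun x : Fin N → Ω =>
      ∑ σ : Equiv.Perm (Fin N), ∑ τ : Equiv.Perm (Fin N),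
        c σ * c τ * ∏ j, g (σ j) (τ j) (x j)) (Measure.pi fun _ => μ) :=
    integrable_finset_sum _ fun σ _ => integrable_finset_sum _ fun τ _ => hterm σ τ
  -- compute the complex integral
  have hprod : ∀ σ τ : Equiv.Perm (Fin N),
      (∏ j, ∫ a, g (σ j) (τ j) a ∂μ) = if σ = τ then (1 : ℂ) else 0 := by
    intro σ τ
    have : ∀ j, (∫ a, g (σ j) (τ j) a ∂μ) = if σ j = τ j then (1 : ℂ) else 0 :=
      fun j => hON (σ j) (τ j)
    simp only [this]
    by_cases h : σ = τ
    · simp [h]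
    · obtain ⟨j, hj⟩ : ∃ j, σ j ≠ τ j := by
        by_contra hcon
        push_neg at hcon
        exact h (Equiv.ext hcon)
      rw [if_neg h]
      exact Finset.prod_eq_zero (Finset.mem_univ j) (by simp [hj])
  have hFI : (∫ x : Fin N → Ω, ∑ σ : Equiv.Perm (Fin N), ∑ τ : Equiv.Perm (Fin N),
      c σ * c τ * ∏ j, g (σ j) (τ j) (x j) ∂(Measure.pi fun _ => μ))
      = (Nat.factorial N : ℂ) := by
    rw [integral_finset_sum _ fun σ _ => integrable_finset_sum _ fun τ _ => hterm σ τ]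
    have step : ∀ σ : Equiv.Perm (Fin N),
        (∫ x : Fin N → Ω, ∑ τ : Equiv.Perm (Fin N),
          c σ * c τ * ∏ j, g (σ j) (τ j) (x j) ∂(Measure.pi fun _ => μ))
        = c σ * c σ := by
      intro σ
      rw [integral_finset_sum _ fun τ _ => hterm σ τ]
      have step2 : ∀ τ : Equiv.Perm (Fin N),
          (∫ x : Fin N → Ω, c σ * c τ * ∏ j, g (σ j) (τ j) (x j)
            ∂(Measure.pi fun _ => μ))
          = c σ * c τ * if σ = τ then 1 else 0 := by
        intro τ
        rw [hvol, integral_const_mul, ← hvol,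
          integral_fintype_prod_eq_prod (ι := Fin N) (fun j => g (σ j) (τ j)) (μ := fun _ => μ)]
        have heq : ∀ i, (∫ x : Ω, g (σ i) (τ i) x) = ∫ a, g (σ i) (τ i) a ∂μ :=
          fun i => rfl
        simp only [heq, hprod σ τ]
      simp only [step2]
      simp [Finset.sum_ite_eq, mul_ite]
    simp only [step]
    have : ∀ σ : Equiv.Perm (Fin N), c σ * c σ = 1 := by
      intro σ
      rw [hc]
      push_cast [← Int.cast_mul, Int.units_mul_self]
      norm_num
    simp only [this]
    simp [Finset.card_univ, Fintype.card_perm]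
  -- put it together
  calc ∫ x : Fin N → Ω, ‖Matrix.det (Matrix.of fun i j => s i (x j))‖ ^ 2
        ∂(Measure.pi fun _ => μ)
      = ∫ x : Fin N → Ω, (∑ σ : Equiv.Perm (Fin N), ∑ τ : Equiv.Perm (Fin N),
          c σ * c τ * ∏ j, g (σ j) (τ j) (x j)).re ∂(Measure.pi fun _ => μ) := by
        simp only [hdet]
    _ = (∫ x : Fin N → Ω, ∑ σ : Equiv.Perm (Fin N), ∑ τ : Equiv.Perm (Fin N),
          c σ * c τ * ∏ j, g (σ j) (τ j) (x j) ∂(Measure.pi fun _ => μ)).re := by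
        rw [← RCLike.re_to_complex]
        rw [← integral_re hF]
        simp [RCLike.re_to_complex]
    _ = (Nat.factorial N : ℝ) := by rw [hFI]; simp
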